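/- The 'bundling' allocation rule — which, given reports v=(v₁,v₂) and w=(w₁,w₂), allocates both arriving items to the bidder achieving max{v₁,v₂,w₁,w₂} — admits no payment functions making the resulting mechanism DSIC and IR in the two-bidder two-item online setting. Concretely: there exist reports where v₂ is the unique maximum, w₁ > v₁, and only item 1 arrives, such that any IR payment for V is at most v₁, and then bidder V with a different true type (v₁' slightly below w₁, v₂' huge) gains by misreporting. -/

import Mathlib

open scoped ENNReal

noncomputable section

/-- Nonnegative orthant of ℝ² (valid type space of a bidder). -/
def Nn (p : ℝ × ℝ) : Prop := 0 ≤ p.1 ∧ 0 ≤ p.2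

/-- A deterministic mechanism for two unit-demand bidders `V`, `W` and two items.
`xV1 v w` is the (scenario-independent) allocation of item 1 to `V`, `xV2 v w`
the allocation of item 2 to `V` in the scenario where both items arrive;
`pV1` is `V`'s payment in the only-item-1 scenario and `pV2` in the both-items
scenario; similarly for `W`. -/
structure Mechanism where
  xV1 : ℝ × ℝ → ℝ × ℝ → Bool
  xV2 : ℝ × ℝ → ℝ × ℝ → Bool
  xW1 : ℝ × ℝ → ℝ × ℝ → Bool
  xW2 : ℝ × ℝ → ℝ × ℝ → Bool
  pV1 : ℝ × ℝ → ℝ × ℝ → ℝ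
  pV2 : ℝ × ℝ → ℝ × ℝ → ℝ
  pW1 : ℝ × ℝ → ℝ × ℝ → ℝ
  pW2 : ℝ × ℝ → ℝ × ℝ → ℝ
  feas1 : ∀ v w, ¬(xV1 v w = true ∧ xW1 v w = true)
  feas2 : ∀ v w, ¬(xV2 v w = true ∧ xW2 v w = true)

/-- Unit-demand value of a bidder with type `t` for the set of items indicated by `a1, a2`. -/
def setVal (t : ℝ × ℝ) (a1 a2 : Bool) : ℝ :=
  if a1 then (if a2 then max t.1 t.2 else t.1) else (if a2 then t.2 else 0)

/-- Utility of `V` with true type `t`, report `r`, opponent report `w`, when only item 1 arrives. -/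
def uV1 (m : Mechanism) (t r w : ℝ × ℝ) : ℝ := (if m.xV1 r w then t.1 else 0) - m.pV1 r w

/-- Utility of `V` with true type `t`, report `r`, opponent report `w`, when both items arrive. -/
def uV2 (m : Mechanism) (t r w : ℝ × ℝ) : ℝ := setVal t (m.xV1 r w) (m.xV2 r w) - m.pV2 r w

def uW1 (m : Mechanism) (v t r : ℝ × ℝ) : ℝ := (if m.xW1 v r then t.1 else 0) - m.pW1 v r

def uW2 (m : Mechanism) (v t r : ℝ × ℝ) : ℝ := setVal t (m.xW1 v r) (m.xW2 v r) - m.pW2 v r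

/-- Dominant-strategy incentive compatibility in every arrival scenario. -/
def DSIC (m : Mechanism) : Prop :=
  (∀ t r w, Nn t → Nn r → Nn w → uV1 m t r w ≤ uV1 m t t w) ∧
  (∀ t r w, Nn t → Nn r → Nn w → uV2 m t r w ≤ uV2 m t t w) ∧
  (∀ v t r, Nn v → Nn t → Nn r → uW1 m v t r ≤ uW1 m v t t) ∧
  (∀ v t r, Nn v → Nn t → Nn r → uW2 m v t r ≤ uW2 m v t t)

/-- Individual rationality: truthful reporting gives nonnegative utility in every scenario. -/
def IR (m : Mechanism) : Prop :=
  ∀ v w, Nn v → Nn w →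
    0 ≤ uV1 m v v w ∧ 0 ≤ uV2 m v v w ∧ 0 ≤ uW1 m v w w ∧ 0 ≤ uW2 m v w w

/-- Welfare of the mechanism's allocation when only item 1 arrives. -/
def welfare1 (m : Mechanism) (v w : ℝ × ℝ) : ℝ :=
  (if m.xV1 v w then v.1 else 0) + (if m.xW1 v w then w.1 else 0)

/-- Welfare of the mechanism's allocation when both items arrive. -/
def welfare2 (m : Mechanism) (v w : ℝ × ℝ) : ℝ :=
  setVal v (m.xV1 v w) (m.xV2 v w) + setVal w (m.xW1 v w) (m.xW2 v w)

/-- Optimal welfare when only item 1 arrives. -/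
def opt1 (v w : ℝ × ℝ) : ℝ := max v.1 w.1

/-- Optimal (max-weight matching) welfare when both items arrive. -/
def opt2 (v w : ℝ × ℝ) : ℝ := max (v.1 + w.2) (v.2 + w.1)

/-- The mechanism achieves approximation factor `H` to the optimal social welfare,
in every arrival scenario and for all reports. -/
def ApproxH (m : Mechanism) (H : ℝ) : Prop :=
  ∀ v w, Nn v → Nn w → opt1 v w ≤ H * welfare1 m v w ∧ opt2 v w ≤ H * welfare2 m v w

/-- the bundling allocation rule — which gives all arriving items to
the bidder with the highest single reported value — admits no payments making the
mechanism DSIC and IR. -/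
theorem bundling_not_truthful (m : Mechanism)
    (hbundle : ∀ v w : ℝ × ℝ, Nn v → Nn w →
      (max w.1 w.2 < max v.1 v.2 →
        m.xV1 v w = true ∧ m.xV2 v w = true ∧ m.xW1 v w = false ∧ m.xW2 v w = false) ∧
      (max v.1 v.2 < max w.1 w.2 →
        m.xW1 v w = true ∧ m.xW2 v w = true ∧ m.xV1 v w = false ∧ m.xV2 v w = false)) :
    ¬(DSIC m ∧ IR m) := by
  rintro ⟨⟨hdsic1, -, -, -⟩, -⟩
  set w : ℝ × ℝ := (2, 0) with hw
  set v : ℝ × ℝ := (1, 3) with hv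
  set s : ℝ × ℝ := (1.9, 0) with hs
  have hNv : Nn v := ⟨by norm_num, by norm_num⟩
  have hNw : Nn w := ⟨by norm_num, by norm_num⟩
  have hNs : Nn s := ⟨by norm_num, by norm_num⟩
  -- v wins item 1 (max v = 3 > 2 = max w)
  have hvwin : m.xV1 v w = true := ((hbundle v w hNv hNw).1 (by norm_num [hv, hw])).1
  -- s loses item 1 (max s = 1.9 < 2 = max w)
  have hslose : m.xV1 s w = false := ((hbundle s w hNs hNw).2 (by norm_num [hs, hw])).2.2.1
  have h1 := hdsic1 v s w hNv hNs hNw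
  have h2 := hdsic1 s v w hNs hNv hNw
  simp only [uV1, hvwin, hslose, if_true, if_false] at h1 h2
  simp only [hv, hs] at h1 h2
  norm_num at h1 h2
  linarith
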